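/- If n − i < k, then the maximum of Σ_{j=1}^k λ_j over all achievable request vectors λ ∈ S_i(n,k) equals i; that is, every λ ∈ S_i(n,k) satisfies Σ_{j=1}^k λ_j ≤ i, and the vector λ = (1,…,1,0,…,0) with i ones followed by k−i zeros belongs to S_i(n,k) and attains this sum with equality. -/

import Mathlib

open Matrix

/-- `R ⊆ [n]` is a recovery set for object `j` under generator matrix `G`:
the standard basis vector `e_j` lies in the span of the columns of `G` indexed by `R`,
and minimally so. -/
def IsRecoverySet {F : Type*} [Field F] {k n : ℕ} (G : Matrix (Fin k) (Fin n) F)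
    (j : Fin k) (R : Finset (Fin n)) : Prop :=
  (Pi.single j 1 : Fin k → F) ∈ Submodule.span F (Gᵀ '' (R : Set (Fin n))) ∧
    ∀ S : Finset (Fin n), S ⊂ R →
      (Pi.single j 1 : Fin k → F) ∉ Submodule.span F (Gᵀ '' (S : Set (Fin n)))

/-- A valid allocation of request rates `lam` to recovery sets: nonnegative weights
`w j R` supported on recovery sets, summing to `lam j` for each object `j`, and
loading each server `l` by at most its unit capacity. -/
def IsValidAllocation {F : Type*} [Field F] {k n : ℕ} (G : Matrix (Fin k) (Fin n) F)
    (lam : Fin k → ℝ) (w : Fin k → Finset (Fin n) → ℝ) : Prop :=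
  (∀ j R, 0 ≤ w j R) ∧
  (∀ j R, ¬ IsRecoverySet G j R → w j R = 0) ∧
  (∀ j, ∑ R : Finset (Fin n), w j R = lam j) ∧
  (∀ l : Fin n, ∑ j : Fin k, ∑ R ∈ Finset.univ.filter (fun R : Finset (Fin n) => l ∈ R),
      w j R ≤ 1)

/-- The service rate region of `G`. -/
def ServiceRegion {F : Type*} [Field F] {k n : ℕ} (G : Matrix (Fin k) (Fin n) F) :
    Set (Fin k → ℝ) :=
  {lam | (∀ j, 0 ≤ lam j) ∧ ∃ w, IsValidAllocation G lam w}

/-- `Gmat M i` = the `k × n` matrix formed by the `i` leftmost (systematic) columns of `M`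
followed by the `n - i` rightmost (parity) columns of `M`. -/
def Gmat {F : Type*} [Field F] {k n : ℕ} (M : Matrix (Fin k) (Fin (k + n)) F) (i : ℕ) :
    Matrix (Fin k) (Fin n) F :=
  Matrix.of fun r l =>
    if (l : ℕ) < i then M r ⟨(l : ℕ), by have := l.isLt; omega⟩
    else M r ⟨k + (l : ℕ), by have := l.isLt; omega⟩

lemma card_filter_lt_aux (m i : ℕ) (h : i ≤ m) :
    ((Finset.univ : Finset (Fin m)).filter (fun l : Fin m => (l:ℕ) < i)).card = i := by
  have : (Finset.univ : Finset (Fin m)).filter (fun l : Fin m => (l:ℕ) < i)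
      = Finset.image (Fin.castLE h) Finset.univ := by
    ext l
    simp only [Finset.mem_filter, Finset.mem_univ, true_and, Finset.mem_image]
    constructor
    · intro hl; exact ⟨⟨l, hl⟩, Fin.ext rfl⟩
    · rintro ⟨a, rfl⟩; exact a.isLt
  rw [this, Finset.card_image_of_injective _ (Fin.castLE_injective h)]
  simp

lemma no_sys_no_span {F : Type*} [Field F] {k n : ℕ} (hkn : k ≤ n)
    (M : Matrix (Fin k) (Fin (k + n)) F)
    (hsys : ∀ j : Fin k, ∀ r : Fin k, M r (Fin.castAdd n j) = if r = j then (1 : F) else 0)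
    (hMDS : ∀ S : Finset (Fin (k + n)), S.card = k →
      LinearIndependent F (fun l : S => Mᵀ (l : Fin (k + n))))
    (i : ℕ) (hni : n - i < k) (j : Fin k)
    (R : Finset (Fin n)) (hR : ∀ l ∈ R, ¬ (l : ℕ) < i) :
    (Pi.single j 1 : Fin k → F) ∉
      Submodule.span F ((Gmat M i)ᵀ '' (R : Set (Fin n))) := by
  set emb : Fin n → Fin (k + n) := fun l => ⟨k + l, by have := l.isLt; omega⟩ with hemb
  have hsingle : (Pi.single j 1 : Fin k → F) = Mᵀ (Fin.castAdd n j) := by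
    funext r
    simp [Matrix.transpose_apply, hsys j r, Pi.single_apply]
  have himg : (Gmat M i)ᵀ '' (R : Set (Fin n)) = Mᵀ '' (emb '' (R : Set (Fin n))) := by
    rw [Set.image_image (g := (Mᵀ : Fin (k+n) → Fin k → F))]
    apply Set.image_congr
    intro l hl
    funext r
    simp [Gmat, Matrix.transpose_apply, hR l hl, hemb]
  -- the candidate column set
  set T : Finset (Fin (k + n)) := insert (Fin.castAdd n j) (R.image emb) with hT
  have hRcard : R.card ≤ n - i := by
    have h1 : R ⊆ Finset.univ.filter (fun l : Fin n => ¬ (l:ℕ) < i) := fun l hl =>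
      Finset.mem_filter.2 ⟨Finset.mem_univ l, hR l hl⟩
    have h2 := Finset.card_le_card h1
    have h3 : ((Finset.univ : Finset (Fin n)).filter (fun l : Fin n => (l:ℕ) < i)).card
        + ((Finset.univ : Finset (Fin n)).filter (fun l : Fin n => ¬ (l:ℕ) < i)).card = n := by
      rw [Finset.card_filter_add_card_filter_not]; simp
    rcases le_or_gt i n with hin | hin
    · have h4 := card_filter_lt_aux n i hin
      omega
    ·
      have : R = ∅ := by
        rw [Finset.eq_empty_iff_forall_notMem]
        intro l hl
        exact hR l hl (lt_of_lt_of_le l.isLt (le_of_lt hin))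
      simp [this]
  have hTcard : T.card ≤ k := by
    rw [hT]
    have h1 := Finset.card_insert_le (Fin.castAdd n j) (R.image emb)
    have h2 := Finset.card_image_le (f := emb) (s := R)
    omega
  obtain ⟨S, hTS, hS⟩ := Finset.exists_superset_card_eq hTcard (by simp)
  have hli := hMDS S hS
  have hjS : Fin.castAdd n j ∈ S := hTS (Finset.mem_insert_self _ _)
  have hsub : (R.image emb : Finset (Fin (k+n))) ⊆ S :=
    fun x hx => hTS (Finset.mem_insert_of_mem hx)
  have hnotmem : (⟨Fin.castAdd n j, hjS⟩ : S) ∉ {x : S | (x : Fin (k+n)) ∈ R.image emb} := by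
    intro hx
    simp only [Set.mem_setOf_eq, Finset.mem_image] at hx
    obtain ⟨l, _, hl⟩ := hx
    have : k + (l:ℕ) = (j:ℕ) := congrArg Fin.val hl
    have := j.isLt
    omega
  have key := hli.notMem_span_image hnotmem
  have himg2 : (fun l : S => Mᵀ (l : Fin (k+n))) '' {x : S | (x : Fin (k+n)) ∈ R.image emb}
      = Mᵀ '' (emb '' (R : Set (Fin n))) := by
    ext y
    constructor
    · rintro ⟨⟨x, hxS⟩, hx, rfl⟩
      simp only [Set.mem_setOf_eq, Finset.mem_image] at hx
      obtain ⟨l, hlR, rfl⟩ := hx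
      exact ⟨emb l, ⟨l, hlR, rfl⟩, rfl⟩
    · rintro ⟨x, hx, rfl⟩
      obtain ⟨l, hlR, rfl⟩ := hx
      have hx' : emb l ∈ R.image emb := Finset.mem_image_of_mem _ hlR
      exact ⟨⟨emb l, hsub hx'⟩, by simpa using hx', rfl⟩
  rw [himg, hsingle]
  rw [himg2] at key
  exact key

theorem maximal_matching_simplex_small_n
    {F : Type*} [Field F] [Fintype F] {k n : ℕ} (hk : 2 ≤ k) (hkn : k ≤ n)
    (hq : k + n + 1 ≤ Fintype.card F)
    (M : Matrix (Fin k) (Fin (k + n)) F)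
    (hsys : ∀ j : Fin k, ∀ r : Fin k, M r (Fin.castAdd n j) = if r = j then (1 : F) else 0)
    (hMDS : ∀ S : Finset (Fin (k + n)), S.card = k →
      LinearIndependent F (fun l : S => Mᵀ (l : Fin (k + n))))
    (i : ℕ) (hik : i ≤ k) (hni : n - i < k) :
    (∀ lam ∈ ServiceRegion (Gmat M i), ∑ j, lam j ≤ (i : ℝ)) ∧
      (fun j : Fin k => if (j : ℕ) < i then (1 : ℝ) else 0) ∈ ServiceRegion (Gmat M i) ∧
      ∑ j : Fin k, (if (j : ℕ) < i then (1 : ℝ) else 0) = (i : ℝ) := by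
  have hin : i ≤ n := hik.trans hkn
  -- every recovery set meets a systematic server
  have hrec : ∀ (j : Fin k) (R : Finset (Fin n)), IsRecoverySet (Gmat M i) j R →
      ∃ l ∈ R, (l : ℕ) < i := by
    intro j R hRrec
    by_contra h
    push_neg at h
    exact no_sys_no_span hkn M hsys hMDS i hni j R
      (fun l hl => not_lt.2 (h l hl)) hRrec.1
  constructor
  · -- upper bound
    rintro lam ⟨hpos, w, hw0, hwrec, hwsum, hwcap⟩
    set Sys : Finset (Fin n) := Finset.univ.filter (fun l : Fin n => (l:ℕ) < i) with hSys
    have hSyscard : Sys.card = i := card_filter_lt_aux n i hin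
    have key : ∀ j, ∑ R : Finset (Fin n), w j R ≤
        ∑ l ∈ Sys, ∑ R ∈ Finset.univ.filter (fun R : Finset (Fin n) => l ∈ R), w j R := by
      intro j
      have : ∑ l ∈ Sys, ∑ R ∈ Finset.univ.filter (fun R : Finset (Fin n) => l ∈ R), w j R
          = ∑ R : Finset (Fin n), ∑ l ∈ Sys, if l ∈ R then w j R else 0 := by
        rw [Finset.sum_comm]
        apply Finset.sum_congr rfl
        intro l _
        rw [Finset.sum_filter]
      rw [this]
      apply Finset.sum_le_sum
      intro R _
      rcases eq_or_ne (w j R) 0 with hz | hz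
      · rw [hz]
        apply Finset.sum_nonneg
        intro l _
        simp [hz]
      · have hRrec : IsRecoverySet (Gmat M i) j R := by
          by_contra hc
          exact hz (hwrec j R hc)
        obtain ⟨l0, hl0R, hl0i⟩ := hrec j R hRrec
        have hl0Sys : l0 ∈ Sys := Finset.mem_filter.2 ⟨Finset.mem_univ _, hl0i⟩
        have := Finset.single_le_sum (f := fun l => if l ∈ R then w j R else 0)
          (fun l _ => by by_cases h : l ∈ R <;> simp [h, hw0 j R]) hl0Sys
        simpa [hl0R] using this
    calc ∑ j, lam j = ∑ j, ∑ R : Finset (Fin n), w j R := by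
            apply Finset.sum_congr rfl; intro j _; exact (hwsum j).symm
      _ ≤ ∑ j, ∑ l ∈ Sys, ∑ R ∈ Finset.univ.filter (fun R : Finset (Fin n) => l ∈ R), w j R :=
            Finset.sum_le_sum fun j _ => key j
      _ = ∑ l ∈ Sys, ∑ j, ∑ R ∈ Finset.univ.filter (fun R : Finset (Fin n) => l ∈ R), w j R :=
            Finset.sum_comm
      _ ≤ ∑ l ∈ Sys, 1 := Finset.sum_le_sum fun l _ => hwcap l
      _ = (i : ℝ) := by rw [Finset.sum_const, hSyscard]; simp
  constructor
  · -- achievability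
    set pos : Fin k → Fin n := fun j => ⟨(j:ℕ), lt_of_lt_of_le j.isLt hkn⟩ with hpos
    have hcol : ∀ j : Fin k, (j:ℕ) < i →
        (Gmat M i)ᵀ (pos j) = (Pi.single j 1 : Fin k → F) := by
      intro j hj
      funext r
      have : (Gmat M i)ᵀ (pos j) r = M r ⟨(j:ℕ), by have := j.isLt; omega⟩ := by
        simp [Gmat, Matrix.transpose_apply, hpos, hj]
      rw [this]
      have hcast : (⟨(j:ℕ), by have := j.isLt; omega⟩ : Fin (k+n)) = Fin.castAdd n j := by
        apply Fin.ext; rfl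
      rw [hcast, hsys j r, Pi.single_apply]
    have hrecov : ∀ j : Fin k, (j:ℕ) < i → IsRecoverySet (Gmat M i) j {pos j} := by
      intro j hj
      constructor
      · have : (Gmat M i)ᵀ (pos j) ∈ (Gmat M i)ᵀ '' (({pos j} : Finset (Fin n)) : Set (Fin n)) := by
          exact ⟨pos j, by simp, rfl⟩
        have hmem := Submodule.subset_span (R := F) this
        rwa [hcol j hj] at hmem
      · intro S hS
        have hSempty : S = ∅ := by
          rcases Finset.eq_empty_or_nonempty S with h | h
          · exact h
          · exfalso
            obtain ⟨x, hx⟩ := h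
            have hsub := hS.1
            have : x = pos j := by
              have := hsub hx; simpa using this
            subst this
            exact hS.2 (Finset.singleton_subset_iff.2 hx)
        subst hSempty
        simp only [Finset.coe_empty, Set.image_empty (f := ((Gmat M i)ᵀ : Fin n → Fin k → F)), Submodule.span_empty,
          Submodule.mem_bot]
        intro hzero
        have := congrFun hzero j
        simp at this
    have hposval : ∀ j : Fin k, ((pos j : Fin n) : ℕ) = (j : ℕ) := fun j => rfl
    refine ⟨?_, (fun j R => if (j:ℕ) < i ∧ R = {pos j} then (1:ℝ) else 0), ?_, ?_, ?_, ?_⟩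
    · intro j
      show (0:ℝ) ≤ if (j:ℕ) < i then 1 else 0
      split <;> norm_num
    · intro j R
      show (0:ℝ) ≤ if (j:ℕ) < i ∧ R = {pos j} then 1 else 0
      split <;> norm_num
    · intro j R hnot
      show (if (j:ℕ) < i ∧ R = {pos j} then (1:ℝ) else 0) = 0
      rw [if_neg]
      rintro ⟨h1, rfl⟩
      exact hnot (hrecov j h1)
    · intro j
      show (∑ R : Finset (Fin n), if (j:ℕ) < i ∧ R = {pos j} then (1:ℝ) else 0)
          = if (j:ℕ) < i then 1 else 0
      have hterm : ∀ R : Finset (Fin n),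
          (if (j:ℕ) < i ∧ R = {pos j} then (1:ℝ) else 0)
          = if R = {pos j} then (if (j:ℕ) < i then (1:ℝ) else 0) else 0 := by
        intro R
        by_cases hR : R = {pos j} <;> by_cases hji : (j:ℕ) < i <;> simp [hR, hji]
      rw [Finset.sum_congr rfl (fun R _ => hterm R), Finset.sum_ite_eq']
      simp
    · intro l
      have hinner : ∀ j : Fin k,
          (∑ R ∈ Finset.univ.filter (fun R : Finset (Fin n) => l ∈ R),
            if (j:ℕ) < i ∧ R = {pos j} then (1:ℝ) else 0)
          = if (j:ℕ) < i ∧ l = pos j then 1 else 0 := by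
        intro j
        rw [Finset.sum_filter]
        have hterm : ∀ R : Finset (Fin n),
            (if l ∈ R then (if (j:ℕ) < i ∧ R = {pos j} then (1:ℝ) else 0) else 0)
            = if R = {pos j} then (if (j:ℕ) < i ∧ l = pos j then (1:ℝ) else 0) else 0 := by
          intro R
          by_cases hR : R = {pos j} <;> by_cases hji : (j:ℕ) < i <;>
            by_cases hlp : l = pos j <;>
            simp [hR, hji, hlp, Finset.mem_singleton]
        rw [Finset.sum_congr rfl (fun R _ => hterm R), Finset.sum_ite_eq']
        simp
      show (∑ j : Fin k, ∑ R ∈ Finset.univ.filter (fun R : Finset (Fin n) => l ∈ R),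
          if (j:ℕ) < i ∧ R = {pos j} then (1:ℝ) else 0) ≤ 1
      rw [Finset.sum_congr rfl (fun j _ => hinner j)]
      rcases lt_or_ge (l:ℕ) k with hlk | hlk
      · set j0 : Fin k := ⟨(l:ℕ), hlk⟩ with hj0
        have hlp : ∀ j : Fin k, l = pos j ↔ j = j0 := by
          intro j
          constructor
          · intro h
            exact Fin.ext (congrArg Fin.val h).symm
          · rintro rfl
            exact Fin.ext rfl
        have hterm : ∀ j : Fin k,
            (if (j:ℕ) < i ∧ l = pos j then (1:ℝ) else 0)
            = if j = j0 then (if (j0:ℕ) < i then (1:ℝ) else 0) else 0 := by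
          intro j
          by_cases hj : j = j0
          · subst hj
            by_cases hji : (j0:ℕ) < i <;> simp [hji, hlp]
          · rw [if_neg hj, if_neg (by rintro ⟨_, h2⟩; exact hj ((hlp j).1 h2))]
        rw [Finset.sum_congr rfl (fun j _ => hterm j), Finset.sum_ite_eq']
        simp only [Finset.mem_univ, if_true]
        split <;> norm_num
      · rw [Finset.sum_eq_zero]
        · norm_num
        · intro j _
          rw [if_neg]
          rintro ⟨_, h⟩
          have : (l:ℕ) = (j:ℕ) := congrArg Fin.val h
          have := j.isLt
          omega
  · -- the sum equals i
    rw [Finset.sum_boole, card_filter_lt_aux k i hik]
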